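/- The map Ψ_{2,2} : Sym^2(Sym^2 V) → Sym^2(Sym^2 V) is injective (equivalently, an isomorphism) for any finite-dimensional complex vector space V with dim V ≥ 2. -/

import Mathlib

set_option linter.unusedSectionVars false
set_option linter.deprecated false
set_option synthInstance.maxHeartbeats 1000000
set_option maxHeartbeats 1000000
set_option maxRecDepth 4000
noncomputable section
open PiTensorProduct TensorProduct

namespace Foulkes

variable (V : Type) [AddCommGroup V] [Module ℂ V]
variable (W : Type) [AddCommGroup W] [Module ℂ W]

/-- The action of a permutation on the tensor power, permuting the tensor factors. -/
def permAct (n : ℕ) (π : Equiv.Perm (Fin n)) : (⨂[ℂ]^n V) ≃ₗ[ℂ] ⨂[ℂ]^n V :=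
  PiTensorProduct.reindex ℂ (fun _ => V) π

/-- The subspace of symmetric tensors in the `n`-th tensor power. -/
def SymT (n : ℕ) : Submodule ℂ (⨂[ℂ]^n V) :=
  ⨅ π : Equiv.Perm (Fin n), LinearMap.ker ((permAct V n π).toLinearMap - LinearMap.id)

lemma mem_SymT {n : ℕ} {x : ⨂[ℂ]^n V} :
    x ∈ SymT V n ↔ ∀ π : Equiv.Perm (Fin n), permAct V n π x = x := by
  simp [SymT, Submodule.mem_iInf, LinearMap.mem_ker, LinearMap.sub_apply, sub_eq_zero]

/-- The symmetrization operator on the `n`-th tensor power. -/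
def symmetrize (n : ℕ) : (⨂[ℂ]^n V) →ₗ[ℂ] ⨂[ℂ]^n V :=
  ((n.factorial : ℂ))⁻¹ • ∑ π : Equiv.Perm (Fin n), (permAct V n π).toLinearMap

lemma permAct_symmetrize (n : ℕ) (π : Equiv.Perm (Fin n)) (x : ⨂[ℂ]^n V) :
    permAct V n π (symmetrize V n x) = symmetrize V n x := by
  unfold symmetrize
  rw [LinearMap.smul_apply, map_smul, LinearMap.sum_apply, map_sum]
  congr 1
  refine Fintype.sum_equiv (Equiv.mulLeft π)
    (fun σ => permAct V n π ((permAct V n σ).toLinearMap x))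
    (fun σ => (permAct V n σ).toLinearMap x) (fun σ => ?_)
  simp only [LinearEquiv.coe_coe, Equiv.coe_mulLeft]
  unfold permAct
  exact PiTensorProduct.reindex_reindex (σ : Fin n ≃ Fin n) (π : Fin n ≃ Fin n) x

lemma symmetrize_mem (n : ℕ) (x : ⨂[ℂ]^n V) : symmetrize V n x ∈ SymT V n :=
  (mem_SymT V).2 fun π => permAct_symmetrize V n π x

/-- The canonical projection onto symmetric tensors. -/
def projSym (n : ℕ) : (⨂[ℂ]^n V) →ₗ[ℂ] SymT V n :=
  (symmetrize V n).codRestrict _ (symmetrize_mem V n)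

variable {V W} in
lemma map_mem_SymT {n : ℕ} (f : V →ₗ[ℂ] W) {x : ⨂[ℂ]^n V} (hx : x ∈ SymT V n) :
    (PiTensorProduct.map fun _ => f) x ∈ SymT W n := by
  rw [mem_SymT] at hx ⊢
  intro π
  unfold permAct at hx ⊢
  have h := PiTensorProduct.map_reindex (fun _ : Fin n => f) (π : Fin n ≃ Fin n) x
  rw [← h, hx π]

variable {V W} in
/-- The map on symmetric tensors induced functorially by a linear map. -/
def symMap (n : ℕ) (f : V →ₗ[ℂ] W) : SymT V n →ₗ[ℂ] SymT W n :=
  LinearMap.codRestrict _ ((PiTensorProduct.map fun _ => f) ∘ₗ (SymT V n).subtype)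
    (fun x => map_mem_SymT f x.2)

lemma tprod_const_mem (n : ℕ) (v : V) : (tprod ℂ fun _ : Fin n => v) ∈ SymT V n := by
  simp [mem_SymT, permAct, PiTensorProduct.reindex_tprod]

/-- Flattening a tensor power of tensor powers. -/
def flat (b : ℕ) : ∀ a : ℕ, (⨂[ℂ] _ : Fin a, (⨂[ℂ]^b V)) ≃ₗ[ℂ] ⨂[ℂ] _ : Fin a × Fin b, V
  | 0 => (isEmptyEquiv (Fin 0)).trans (isEmptyEquiv (Fin 0 × Fin b)).symm
  | (a + 1) =>
    (PiTensorProduct.reindex ℂ (fun _ => ⨂[ℂ]^b V)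
        (finSumFinEquiv (m := a) (n := 1)).symm).trans <|
      (tmulEquiv ℂ (⨂[ℂ]^b V)).symm.trans <|
        (TensorProduct.congr (flat b a) (subsingletonEquiv (0 : Fin 1))).trans <|
          (tmulEquiv ℂ V).trans <|
            PiTensorProduct.reindex ℂ (fun _ => V)
              (((Equiv.sumCongr (Equiv.refl (Fin a × Fin b))
                    (Equiv.uniqueProd (Fin b) (Fin 1)).symm).trans
                  (Equiv.sumProdDistrib (Fin a) (Fin 1) (Fin b)).symm).trans
                (Equiv.prodCongr finSumFinEquiv (Equiv.refl (Fin b))))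

/-- The canonical reordering isomorphism `⊗^a ⊗^b V ≅ ⊗^b ⊗^a V`
exchanging the tensor factors. -/
def reorder (a b : ℕ) : (⨂[ℂ]^a (⨂[ℂ]^b V)) ≃ₗ[ℂ] ⨂[ℂ]^b (⨂[ℂ]^a V) :=
  (flat V b a).trans <|
    (PiTensorProduct.reindex ℂ (fun _ => V) (Equiv.prodComm (Fin a) (Fin b))).trans
      (flat V a b).symm

/-- The Foulkes–Howe map `Ψ_{a,b} : Sym^a Sym^b V → Sym^b Sym^a V`:
the composition of the inclusion of symmetric tensors into `⊗^a ⊗^b V`,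
the reordering isomorphism `⊗^a ⊗^b V ≅ ⊗^b ⊗^a V`, and the canonical
projection onto `Sym^b Sym^a V`. -/
def Psi (a b : ℕ) : SymT (SymT V b) a →ₗ[ℂ] SymT (SymT V a) b :=
  projSym (SymT V a) b ∘ₗ
    (PiTensorProduct.map fun _ : Fin b => projSym V a) ∘ₗ
      (reorder V a b).toLinearMap ∘ₗ
        (PiTensorProduct.map fun _ : Fin a => (SymT V b).subtype) ∘ₗ
          (SymT (SymT V b) a).subtype


/-! ### Auxiliary machinery for the proof -/

section Aux

lemma vec_update_zero (a b x : V) : Function.update ![a, b] (0 : Fin 2) x = ![x, b] := by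
  funext i; fin_cases i <;> simp

lemma vec_update_one (a b x : V) : Function.update ![a, b] (1 : Fin 2) x = ![a, x] := by
  funext i; fin_cases i <;> simp

lemma tprod_add_zero (a a' b : V) :
    tprod ℂ ![a + a', b] = tprod ℂ ![a, b] + tprod ℂ ![a', b] := by
  have h := (tprod ℂ (s := fun _ : Fin 2 => V)).map_update_add ![a, b] 0 a a'
  simpa [vec_update_zero] using h

lemma tprod_add_one (a b b' : V) :
    tprod ℂ ![a, b + b'] = tprod ℂ ![a, b] + tprod ℂ ![a, b'] := by
  have h := (tprod ℂ (s := fun _ : Fin 2 => V)).map_update_add ![a, b] 1 b b'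
  simpa [vec_update_one] using h

lemma tprod_smul_zero (c : ℂ) (a b : V) :
    tprod ℂ ![c • a, b] = c • tprod ℂ ![a, b] := by
  have h := (tprod ℂ (s := fun _ : Fin 2 => V)).map_update_smul ![a, b] 0 c a
  simpa [vec_update_zero] using h

lemma tprod_smul_one (c : ℂ) (a b : V) :
    tprod ℂ ![a, c • b] = c • tprod ℂ ![a, b] := by
  have h := (tprod ℂ (s := fun _ : Fin 2 => V)).map_update_smul ![a, b] 1 c b
  simpa [vec_update_one] using h

lemma permAct_one (n : ℕ) (x : ⨂[ℂ]^n V) : permAct V n 1 x = x := by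
  have h : ((1 : Equiv.Perm (Fin n)) : Fin n ≃ Fin n) = Equiv.refl (Fin n) := rfl
  unfold permAct
  rw [h, PiTensorProduct.reindex_refl]
  rfl

lemma permAct_permAct (n : ℕ) (σ π : Equiv.Perm (Fin n)) (x : ⨂[ℂ]^n V) :
    permAct V n σ (permAct V n π x) = permAct V n (σ * π) x := by
  unfold permAct
  exact PiTensorProduct.reindex_reindex (π : Fin n ≃ Fin n) (σ : Fin n ≃ Fin n) x

lemma permAct_tprod (n : ℕ) (π : Equiv.Perm (Fin n)) (f : Fin n → V) :
    permAct V n π (tprod ℂ f) = tprod ℂ fun i => f (π.symm i) := by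
  unfold permAct
  exact PiTensorProduct.reindex_tprod (π : Fin n ≃ Fin n) f

lemma univ_perm_two :
    (Finset.univ : Finset (Equiv.Perm (Fin 2))) = {1, Equiv.swap 0 1} := by
  decide

lemma symmetrize_two (f : Fin 2 → V) :
    symmetrize V 2 (tprod ℂ f) = (2 : ℂ)⁻¹ • (tprod ℂ f + tprod ℂ ![f 1, f 0]) := by
  unfold symmetrize
  rw [LinearMap.smul_apply, LinearMap.sum_apply, univ_perm_two]
  rw [Finset.sum_insert (by decide), Finset.sum_singleton]
  have h1 : (permAct V 2 1).toLinearMap (tprod ℂ f) = tprod ℂ f := permAct_one V 2 _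
  have h2 : (permAct V 2 (Equiv.swap 0 1)).toLinearMap (tprod ℂ f) = tprod ℂ ![f 1, f 0] := by
    rw [LinearEquiv.coe_coe, permAct_tprod]
    congr 1
    funext i; fin_cases i <;> simp
  rw [h1, h2]
  norm_num [Nat.factorial]

lemma symmetrize_of_mem {n : ℕ} {x : ⨂[ℂ]^n V} (hx : x ∈ SymT V n) :
    symmetrize V n x = x := by
  rw [mem_SymT] at hx
  unfold symmetrize
  rw [LinearMap.smul_apply, LinearMap.sum_apply]
  have : ∀ π ∈ (Finset.univ : Finset (Equiv.Perm (Fin n))),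
      (permAct V n π).toLinearMap x = x := fun π _ => hx π
  rw [Finset.sum_congr rfl this, Finset.sum_const, Finset.card_univ, Fintype.card_perm,
    Fintype.card_fin]
  rw [← Nat.cast_smul_eq_nsmul ℂ, smul_smul, inv_mul_cancel₀, one_smul]
  exact_mod_cast Nat.factorial_ne_zero n

lemma symmetrize_permAct (n : ℕ) (π : Equiv.Perm (Fin n)) (x : ⨂[ℂ]^n V) :
    symmetrize V n (permAct V n π x) = symmetrize V n x := by
  unfold symmetrize
  rw [LinearMap.smul_apply, LinearMap.smul_apply]
  congr 1
  rw [LinearMap.sum_apply, LinearMap.sum_apply]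
  refine Fintype.sum_equiv (Equiv.mulRight π)
    (fun σ => (permAct V n σ).toLinearMap (permAct V n π x))
    (fun σ => (permAct V n σ).toLinearMap x) (fun σ => ?_)
  simp only [LinearEquiv.coe_coe, Equiv.coe_mulRight]
  rw [permAct_permAct]

lemma coe_projSym {n : ℕ} (x : ⨂[ℂ]^n V) :
    ((projSym V n x : SymT V n) : ⨂[ℂ]^n V) = symmetrize V n x := rfl

lemma projSym_coe {n : ℕ} (y : SymT V n) : projSym V n (y : ⨂[ℂ]^n V) = y := by
  apply Subtype.ext
  rw [coe_projSym]
  exact symmetrize_of_mem V y.2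

lemma projSym_permAct {n : ℕ} (π : Equiv.Perm (Fin n)) (x : ⨂[ℂ]^n V) :
    projSym V n (permAct V n π x) = projSym V n x := by
  apply Subtype.ext
  rw [coe_projSym, coe_projSym, symmetrize_permAct]

lemma projSym_tprod_comm (a b : V) :
    projSym V 2 (tprod ℂ ![a, b]) = projSym V 2 (tprod ℂ ![b, a]) := by
  rw [← projSym_permAct V (Equiv.swap 0 1) (tprod ℂ ![b, a]), permAct_tprod]
  congr 2
  funext i; fin_cases i <;> simp

variable {V W} in
lemma map_tprod_two (g : V →ₗ[ℂ] W) (a b : V) :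
    (PiTensorProduct.map fun _ : Fin 2 => g) (tprod ℂ ![a, b]) = tprod ℂ ![g a, g b] := by
  rw [PiTensorProduct.map_tprod]
  congr 1
  funext i; fin_cases i <;> simp

/-- Quadratic generator of `Sym² V`. -/
def q (x y : V) : SymT V 2 := projSym V 2 (tprod ℂ ![x, y])

lemma q_comm (x y : V) : q V x y = q V y x := projSym_tprod_comm V x y

/-- Generator of `Sym² Sym² V`. -/
def E (x y z w : V) : SymT (SymT V 2) 2 :=
  projSym (SymT V 2) 2 (tprod ℂ ![q V x y, q V z w])

lemma E_comm_left (x y z w : V) : E V x y z w = E V y x z w := by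
  unfold E; rw [q_comm]

lemma E_comm_right (x y z w : V) : E V x y z w = E V x y w z := by
  unfold E; rw [q_comm V z w]

lemma E_comm_outer (x y z w : V) : E V x y z w = E V z w x y := by
  unfold E; exact projSym_tprod_comm (SymT V 2) _ _

lemma flat_tprod (b a : ℕ) (v : Fin a → Fin b → V) :
    flat V b a (tprod ℂ fun i => tprod ℂ (v i)) =
      tprod ℂ (fun p : Fin a × Fin b => v p.1 p.2) := by
  induction a with
  | zero =>
      simp only [flat, LinearEquiv.trans_apply, isEmptyEquiv_apply_tprod]
      rw [LinearEquiv.symm_apply_eq, isEmptyEquiv_apply_tprod]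
  | succ a ih =>
      simp only [flat, LinearEquiv.trans_apply, reindex_tprod, tmulEquiv_symm_apply,
        TensorProduct.congr_tmul, subsingletonEquiv_apply_tprod, ih, tmulEquiv_apply,
        reindex_tprod]
      congr 1
      funext p
      obtain ⟨i, j⟩ := p
      induction i using Fin.lastCases with
      | last =>
          have h : Fin.last a = Fin.natAdd a (0 : Fin 1) := by ext; simp
          rw [h]
          simp [Equiv.sumProdDistrib, Equiv.uniqueProd]
      | cast i =>
          have h : i.castSucc = Fin.castAdd 1 i := rfl
          rw [h]
          simp [Equiv.sumProdDistrib, Equiv.uniqueProd]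

lemma reorder_tprod (a b : ℕ) (v : Fin a → Fin b → V) :
    reorder V a b (tprod ℂ fun i => tprod ℂ (v i)) =
      tprod ℂ fun j => tprod ℂ fun i => v i j := by
  unfold reorder
  rw [LinearEquiv.trans_apply, LinearEquiv.trans_apply, flat_tprod, reindex_tprod,
    LinearEquiv.symm_apply_eq, flat_tprod]
  congr 1

lemma reorder_T (a b c d : V) :
    reorder V 2 2 (tprod ℂ ![tprod ℂ ![a, b], tprod ℂ ![c, d]]) =
      tprod ℂ ![tprod ℂ ![a, c], tprod ℂ ![b, d]] := by
  have h : (tprod ℂ ![tprod ℂ ![a, b], tprod ℂ ![c, d]] : ⨂[ℂ]^2 (⨂[ℂ]^2 V)) =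
      tprod ℂ fun i => tprod ℂ (![![a, b], ![c, d]] i) := by
    congr 1; funext i; fin_cases i <;> simp
  rw [h, reorder_tprod]
  congr 1
  funext j
  fin_cases j <;> · congr 1; funext i; fin_cases i <;> simp

/-- The canonical surjection from the full tensor space onto `Sym² Sym² V`. -/
def Phi : (⨂[ℂ]^2 (⨂[ℂ]^2 V)) →ₗ[ℂ] SymT (SymT V 2) 2 :=
  projSym (SymT V 2) 2 ∘ₗ PiTensorProduct.map fun _ : Fin 2 => projSym V 2

lemma Phi_T (a b c d : V) :
    Phi V (tprod ℂ ![tprod ℂ ![a, b], tprod ℂ ![c, d]]) = E V a b c d := by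
  unfold Phi E
  rw [LinearMap.comp_apply, map_tprod_two]
  rfl

lemma subtype_E (x y z w : V) :
    ((E V x y z w : SymT (SymT V 2) 2) : ⨂[ℂ]^2 (SymT V 2)) =
      symmetrize (SymT V 2) 2 (tprod ℂ ![q V x y, q V z w]) := rfl

lemma subtype_q (x y : V) :
    ((q V x y : SymT V 2) : ⨂[ℂ]^2 V) = symmetrize V 2 (tprod ℂ ![x, y]) := rfl

lemma q_coe (a b : V) :
    ((q V a b : SymT V 2) : ⨂[ℂ]^2 V) =
      (2 : ℂ)⁻¹ • (tprod ℂ ![a, b] + tprod ℂ ![b, a]) := by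
  rw [subtype_q, symmetrize_two]; simp

lemma E_coe (x y z w : V) :
    ((E V x y z w : SymT (SymT V 2) 2) : ⨂[ℂ]^2 (SymT V 2)) =
      (2 : ℂ)⁻¹ • (tprod ℂ ![q V x y, q V z w] + tprod ℂ ![q V z w, q V x y]) := by
  rw [subtype_E, symmetrize_two]; simp

lemma tprod_expand (c : ℂ) (A A' C C' : V) :
    tprod ℂ ![c • (A + A'), c • (C + C')] =
      (c * c) • (tprod ℂ ![A, C] + tprod ℂ ![A, C'] +
        tprod ℂ ![A', C] + tprod ℂ ![A', C']) := by
  rw [tprod_smul_zero, tprod_smul_one, tprod_add_zero, tprod_add_one V A C C',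
    tprod_add_one V A' C C']
  module

/-- Pure fourfold tensors. -/
def T (a b c d : V) : ⨂[ℂ]^2 (⨂[ℂ]^2 V) :=
  tprod ℂ ![tprod ℂ ![a, b], tprod ℂ ![c, d]]

lemma map_subtype_E_coe (x y z w : V) :
    (PiTensorProduct.map fun _ : Fin 2 => (SymT V 2).subtype)
        ((E V x y z w : SymT (SymT V 2) 2) : ⨂[ℂ]^2 (SymT V 2)) =
      (8 : ℂ)⁻¹ • (T V x y z w + T V x y w z + T V y x z w + T V y x w z +
        (T V z w x y + T V z w y x + T V w z x y + T V w z y x)) := by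
  rw [E_coe, map_smul, map_add, map_tprod_two, map_tprod_two]
  simp only [Submodule.subtype_apply]
  rw [q_coe, q_coe]
  rw [tprod_expand, tprod_expand]
  unfold T
  match_scalars <;> norm_num

lemma Psi_apply' (u : SymT (SymT V 2) 2) :
    Psi V 2 2 u = Phi V (reorder V 2 2
      ((PiTensorProduct.map fun _ : Fin 2 => (SymT V 2).subtype) (u : ⨂[ℂ]^2 (SymT V 2)))) :=
  rfl

lemma Phi_reorder_T (a b c d : V) :
    Phi V (reorder V 2 2 (T V a b c d)) = E V a c b d := by
  unfold T
  rw [reorder_T, Phi_T]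

lemma Psi_E (x y z w : V) :
    Psi V 2 2 (E V x y z w) = (2 : ℂ)⁻¹ • (E V x z y w + E V x w y z) := by
  rw [Psi_apply', map_subtype_E_coe]
  rw [map_smul, map_smul]
  simp only [map_add]
  rw [Phi_reorder_T, Phi_reorder_T, Phi_reorder_T, Phi_reorder_T,
    Phi_reorder_T, Phi_reorder_T, Phi_reorder_T, Phi_reorder_T]
  have h1 : E V y z x w = E V x w y z := E_comm_outer V y z x w
  have h2 : E V y w x z = E V x z y w := E_comm_outer V y w x z
  have h3 : E V z x w y = E V x z y w := by rw [E_comm_left, E_comm_right]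
  have h4 : E V z y w x = E V x w y z := by
    rw [E_comm_left, E_comm_right, E_comm_outer]
  have h5 : E V w x z y = E V x w y z := by rw [E_comm_left, E_comm_right]
  have h6 : E V w y z x = E V x z y w := by
    rw [E_comm_left, E_comm_right, E_comm_outer]
  rw [h1, h2, h3, h4, h5, h6]
  match_scalars <;> norm_num

end Aux

lemma Phi_T' (a b c d : V) : Phi V (T V a b c d) = E V a b c d := Phi_T V a b c d

lemma Phi_section (u : SymT (SymT V 2) 2) :
    Phi V ((PiTensorProduct.map fun _ : Fin 2 => (SymT V 2).subtype)
      (u : ⨂[ℂ]^2 (SymT V 2))) = u := by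
  unfold Phi
  rw [LinearMap.comp_apply]
  have hc := DFunLike.congr_fun
    (PiTensorProduct.map_comp (fun _ : Fin 2 => projSym V 2)
      (fun _ : Fin 2 => (SymT V 2).subtype)).symm (u : ⨂[ℂ]^2 (SymT V 2))
  simp only [LinearMap.comp_apply] at hc
  rw [hc]
  have h : (fun _ : Fin 2 => projSym V 2 ∘ₗ (SymT V 2).subtype) =
      fun _ : Fin 2 => (LinearMap.id : SymT V 2 →ₗ[ℂ] SymT V 2) := by
    funext i
    apply LinearMap.ext
    intro y
    exact projSym_coe V y
  rw [h, PiTensorProduct.map_id, LinearMap.id_apply]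
  exact projSym_coe (SymT V 2) u

lemma key_identity (u : SymT (SymT V 2) 2) :
    (2 : ℂ) • Psi V 2 2 (Psi V 2 2 u) = Psi V 2 2 u + u := by
  have hDE : ∀ a b c d : V,
      (2 : ℂ) • Psi V 2 2 (Psi V 2 2 (E V a b c d)) =
        Psi V 2 2 (E V a b c d) + E V a b c d := by
    intro a b c d
    rw [Psi_E, map_smul, map_add, Psi_E, Psi_E,
      E_comm_right V a d c b, E_comm_right V a b d c, E_comm_right V a c d b]
    match_scalars <;> norm_num
  have h0 : (((2 : ℂ) • (Psi V 2 2 ∘ₗ Psi V 2 2)) ∘ₗ Phi V) ∘ₗ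
        ((flat V 2 2).symm : _ ≃ₗ[ℂ] _).toLinearMap =
      ((Psi V 2 2 + LinearMap.id) ∘ₗ Phi V) ∘ₗ
        ((flat V 2 2).symm : _ ≃ₗ[ℂ] _).toLinearMap := by
    apply PiTensorProduct.ext
    apply MultilinearMap.ext
    intro f
    simp only [LinearMap.compMultilinearMap_apply, LinearMap.comp_apply,
      LinearEquiv.coe_coe, LinearMap.smul_apply, LinearMap.add_apply, LinearMap.id_apply]
    have hf : (flat V 2 2).symm (tprod ℂ f) =
        tprod ℂ fun i => tprod ℂ fun j => f (i, j) := by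
      rw [LinearEquiv.symm_apply_eq, flat_tprod]
    have hT : (tprod ℂ fun i : Fin 2 => tprod ℂ fun j : Fin 2 => f (i, j)) =
        T V (f (0, 0)) (f (0, 1)) (f (1, 0)) (f (1, 1)) := by
      unfold T
      congr 1
      funext i
      fin_cases i <;>
        · simp only [Matrix.cons_val_zero, Matrix.cons_val_one, Matrix.head_cons]
          congr 1
          funext j
          fin_cases j <;> simp
    rw [hf, hT, Phi_T']
    exact hDE _ _ _ _
  have h := DFunLike.congr_fun h0
    (flat V 2 2 ((PiTensorProduct.map fun _ : Fin 2 => (SymT V 2).subtype)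
      (u : ⨂[ℂ]^2 (SymT V 2))))
  simp only [LinearMap.comp_apply, LinearEquiv.coe_coe, LinearEquiv.symm_apply_apply,
    LinearMap.smul_apply, LinearMap.add_apply, LinearMap.id_apply] at h
  rwa [Phi_section] at h

lemma left_inverse_Psi (u : SymT (SymT V 2) 2) :
    (2 : ℂ) • Psi V 2 2 (Psi V 2 2 u) + (-1 : ℂ) • Psi V 2 2 u = u := by
  rw [key_identity V u]
  match_scalars <;> norm_num

/-- `Ψ_{2,2} : Sym²Sym² V → Sym²Sym² V` is injective (equivalently, an isomorphism)
whenever `dim V ≥ 2`. -/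
theorem Psi_two_two_injective (V : Type) [AddCommGroup V] [Module ℂ V]
    [FiniteDimensional ℂ V] (hdim : 2 ≤ Module.finrank ℂ V) :
    Function.Injective (Psi V 2 2) ∧ Function.Bijective (Psi V 2 2) := by
  have hg : ∀ u : SymT (SymT V 2) 2,
      (2 : ℂ) • Psi V 2 2 (Psi V 2 2 u) + (-1 : ℂ) • Psi V 2 2 u = u :=
    left_inverse_Psi V
  have hinj : Function.Injective (Psi V 2 2) := by
    intro a b h
    have ha := hg a
    rw [h] at ha
    rw [← ha, hg b]
  have hsurj : Function.Surjective (Psi V 2 2) := by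
    intro y
    refine ⟨(2 : ℂ) • Psi V 2 2 y + (-1 : ℂ) • y, ?_⟩
    rw [map_add, map_smul, map_smul, key_identity V y]
    match_scalars <;> norm_num
  exact ⟨hinj, hinj, hsurj⟩

end Foulkes
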